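/- Let G be a directed graph on n ≥ 1 nodes such that G does not contain both a source (a node with no incoming edges) and a target (a node receiving edges from all other nodes). Then there exists a real n×n matrix W with W_ii = 0, W_ij < 0 for i ≠ j, W_ij > -1 precisely when j → i in G, and such that (I - W)x = θ·1 has a solution x with all entries strictly positive (for any fixed θ > 0). Concretely, one can achieve x = (θ/(n+r))·1 for some r with 0 < |r| < n. -/

import Mathlib

open Finset

/-- In a directed graph `G` (where `G a b` means there is an edge `a → b`),
a source is a node with no incoming edges. -/
def isSource {n : ℕ} (G : Fin n → Fin n → Prop) (s : Fin n) : Prop :=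
  ∀ j, j ≠ s → ¬ G j s

/-- A target is a node receiving an edge from every other node. -/
def isTarget {n : ℕ} (G : Fin n → Fin n → Prop) (t : Fin n) : Prop :=
  ∀ j, j ≠ t → G j t

theorem stmt_4 {n : ℕ} (hn : 1 ≤ n) (G : Fin n → Fin n → Prop)
    (h : ¬ ((∃ s, isSource G s) ∧ (∃ t, isTarget G t))) :
    ∃ (W : Matrix (Fin n) (Fin n) ℝ) (r : ℝ),
      (∀ i, W i i = 0) ∧
      (∀ i j, i ≠ j → W i j < 0) ∧
      (∀ i j, i ≠ j → (-1 < W i j ↔ G j i)) ∧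
      0 < |r| ∧ |r| < n ∧
      ∀ θ : ℝ, 0 < θ →
        0 < θ / (n + r) ∧
        ((1 - W).mulVec (fun _ => θ / (n + r)) = fun _ => θ) := by
  classical
  have hn1 : (1:ℝ) ≤ (n:ℝ) := by exact_mod_cast hn
  -- in-degree and non-degree counts
  set d : Fin n → ℕ := fun i => (univ.filter fun j => j ≠ i ∧ G j i).card with hd
  set m : Fin n → ℕ := fun i => (univ.filter fun j => j ≠ i ∧ ¬ G j i).card with hm
  have hdm : ∀ i, d i + m i = n - 1 := by
    intro i
    have : d i + m i = (univ.filter fun j => j ≠ i).card := by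
      change (univ.filter fun j => j ≠ i ∧ G j i).card
        + (univ.filter fun j => j ≠ i ∧ ¬ G j i).card = _
      rw [← Finset.filter_filter, ← Finset.filter_filter,
        Finset.card_filter_add_card_filter_not]
    rw [this]
    have : (univ.filter fun j : Fin n => j ≠ i) = univ.erase i := by
      ext j; simp [Finset.mem_erase]
    rw [this, Finset.card_erase_of_mem (mem_univ i), Finset.card_univ, Fintype.card_fin]
  have hdmR : ∀ i, (d i : ℝ) + (m i : ℝ) = (n : ℝ) - 1 := by
    intro i
    have h2 := hdm i
    have h3 : ((d i + m i : ℕ) : ℝ) = ((n - 1 : ℕ) : ℝ) := by rw [h2]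
    rw [Nat.cast_sub hn] at h3
    push_cast at h3
    linarith
  have key : ∀ (a b : Fin n → ℝ) (r : ℝ),
      (∀ i, 0 < a i) → (∀ i, a i < 1) → (∀ i, 1 ≤ b i) →
      0 < |r| → |r| < n →
      (∀ i, (d i : ℝ) * a i + (m i : ℝ) * b i = n + r - 1) →
      ∃ (W : Matrix (Fin n) (Fin n) ℝ) (r : ℝ),
      (∀ i, W i i = 0) ∧
      (∀ i j, i ≠ j → W i j < 0) ∧
      (∀ i j, i ≠ j → (-1 < W i j ↔ G j i)) ∧
      0 < |r| ∧ |r| < n ∧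
      ∀ θ : ℝ, 0 < θ →
        0 < θ / (n + r) ∧
        ((1 - W).mulVec (fun _ => θ / (n + r)) = fun _ => θ) := by
    intro a b r ha0 ha1 hb hr0 hrn hsum
    have hnr : 0 < (n:ℝ) + r := by
      have h2 := abs_lt.mp hrn
      linarith [h2.1]
    set W : Matrix (Fin n) (Fin n) ℝ :=
      fun i j => if j = i then 0 else if G j i then -(a i) else -(b i) with hWdef
    have hWsum : ∀ i, ∑ j, W i j = 1 - ((n:ℝ) + r) := by
      intro i
      have hsplit : (univ.erase i) = (univ.erase i).filter (fun j => G j i) ∪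
          (univ.erase i).filter (fun j => ¬ G j i) := (Finset.filter_union_filter_not_eq _ _).symm
      have hset1 : (univ.erase i).filter (fun j => G j i)
          = univ.filter (fun j => j ≠ i ∧ G j i) := by
        ext j; simp [Finset.mem_erase, Finset.mem_filter]
      have hset2 : (univ.erase i).filter (fun j => ¬ G j i)
          = univ.filter (fun j => j ≠ i ∧ ¬ G j i) := by
        ext j; simp [Finset.mem_erase, Finset.mem_filter]
      have e0 : ∑ j ∈ univ.erase i, W i j + W i i = ∑ j, W i j :=
        Finset.sum_erase_add _ _ (mem_univ i)
      have eWii : W i i = 0 := by simp [hWdef]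
      have e1 : ∑ j ∈ (univ.erase i).filter (fun j => G j i), W i j = (d i : ℝ) * (-(a i)) := by
        have : ∀ j ∈ (univ.erase i).filter (fun j => G j i), W i j = -(a i) := by
          intro j hj
          simp only [Finset.mem_filter, Finset.mem_erase] at hj
          simp [hWdef, hj.1.1, hj.2]
        rw [Finset.sum_congr rfl this, Finset.sum_const, nsmul_eq_mul, hset1]
      have e2 : ∑ j ∈ (univ.erase i).filter (fun j => ¬ G j i), W i j = (m i : ℝ) * (-(b i)) := by
        have : ∀ j ∈ (univ.erase i).filter (fun j => ¬ G j i), W i j = -(b i) := by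
          intro j hj
          simp only [Finset.mem_filter, Finset.mem_erase] at hj
          simp [hWdef, hj.1.1, hj.2]
        rw [Finset.sum_congr rfl this, Finset.sum_const, nsmul_eq_mul, hset2]
      have e3 : ∑ j ∈ univ.erase i, W i j = (d i : ℝ) * (-(a i)) + (m i : ℝ) * (-(b i)) := by
        rw [← Finset.sum_filter_add_sum_filter_not (univ.erase i) (fun j => G j i), e1, e2]
      have := hsum i
      rw [← e0, e3, eWii]
      linarith
    refine ⟨W, r, ?_, ?_, ?_, hr0, hrn, ?_⟩
    · intro i; simp [hWdef]
    · intro i j hij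
      have : ¬ (j = i) := fun hh => hij hh.symm
      rw [hWdef]
      simp only [this, if_false]
      by_cases hg : G j i
      · simp only [hg, if_true]; linarith [ha0 i]
      · simp only [hg, if_false]; linarith [hb i]
    · intro i j hij
      have hji : ¬ (j = i) := fun hh => hij hh.symm
      constructor
      · intro hlt
        by_contra hg
        rw [hWdef] at hlt
        simp only [hji, if_false, hg, if_false] at hlt
        linarith [hb i]
      · intro hg
        rw [hWdef]
        simp only [hji, if_false, hg, if_true]
        linarith [ha1 i]
    · intro θ hθ
      refine ⟨div_pos hθ hnr, ?_⟩
      funext i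
      have e4 : ((1 : Matrix (Fin n) (Fin n) ℝ) - W).mulVec (fun _ => θ/((n:ℝ)+r)) i
          = θ/((n:ℝ)+r) - (∑ j, W i j) * (θ/((n:ℝ)+r)) := by
        rw [Matrix.sub_mulVec]
        simp [Matrix.one_mulVec, Matrix.mulVec, dotProduct, Finset.sum_mul]
      rw [e4, hWsum i]
      field_simp
      ring
  push_neg at h
  by_cases hs : ∃ s, isSource G s
  · -- no target exists; every vertex misses an incoming edge, so m i ≥ 1
    have ht := h hs
    have hm1 : ∀ i, 1 ≤ m i := by
      intro i
      have hnt : ¬ isTarget G i := ht i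
      rw [isTarget] at hnt
      push_neg at hnt
      obtain ⟨j, hne, hng⟩ := hnt
      have : j ∈ univ.filter fun k => k ≠ i ∧ ¬ G k i := by
        simp [hne, hng]
      exact Finset.card_pos.mpr ⟨j, this⟩
    have hm0 : ∀ i, (0:ℝ) < (m i : ℝ) := by
      intro i; exact_mod_cast Nat.lt_of_lt_of_le Nat.zero_lt_one (hm1 i)
    refine key (fun _ => 1/2) (fun i => 1 + ((d i : ℝ) + 1)/(2 * (m i : ℝ))) (1/2)
      (fun i => by norm_num) (fun i => by norm_num) ?_ (by norm_num) ?_ ?_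
    · intro i
      have : 0 ≤ ((d i : ℝ) + 1)/(2 * (m i : ℝ)) := by
        apply div_nonneg <;> [positivity; linarith [hm0 i]]
      linarith
    · rw [abs_of_pos (by norm_num : (0:ℝ) < 1/2)]; linarith
    · intro i
      have hmne : (2 * (m i : ℝ)) ≠ 0 := mul_ne_zero two_ne_zero (ne_of_gt (hm0 i))
      have := hdmR i
      field_simp
      ring_nf
      nlinarith [hm0 i, mul_inv_cancel₀ (ne_of_gt (hm0 i)), (by rw [mul_assoc, mul_inv_cancel₀ (ne_of_gt (hm0 i)), mul_one] : (d i : ℝ) * (m i : ℝ) * (m i : ℝ)⁻¹ = d i)]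
  · -- no source: every vertex has an incoming edge, d i ≥ 1
    have hd1 : ∀ i, 1 ≤ d i := by
      intro i
      have : ¬ isSource G i := fun hh => hs ⟨i, hh⟩
      rw [isSource] at this
      push_neg at this
      obtain ⟨j, hj1, hj2⟩ := this
      have : j ∈ univ.filter fun k => k ≠ i ∧ G k i := by simp [hj1, hj2]
      exact Finset.card_pos.mpr ⟨j, this⟩
    have hd0 : ∀ i, (0:ℝ) < (d i : ℝ) := by
      intro i; exact_mod_cast Nat.lt_of_lt_of_le Nat.zero_lt_one (hd1 i)
    refine key (fun i => 1 - 1/(2 * (d i : ℝ))) (fun _ => 1) (-(1/2))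
      ?_ ?_ (fun i => le_refl 1) (by norm_num) ?_ ?_
    · intro i
      have hd1R : (1:ℝ) ≤ (d i : ℝ) := by exact_mod_cast hd1 i
      have : 1/(2 * (d i : ℝ)) ≤ 1/2 := by
        apply div_le_div_of_nonneg_left <;> linarith
      linarith
    · intro i
      have : 0 < 1/(2 * (d i : ℝ)) := one_div_pos.mpr (by linarith [hd0 i])
      linarith
    · rw [abs_of_neg (by norm_num : -(1/2 : ℝ) < 0)]; linarith
    · intro i
      have hdne : (2 * (d i : ℝ)) ≠ 0 := mul_ne_zero two_ne_zero (ne_of_gt (hd0 i))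
      have := hdmR i
      field_simp
      ring_nf
      nlinarith [hd0 i, mul_inv_cancel₀ (ne_of_gt (hd0 i))]
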